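/- Let k be a field, (A, μ, Δ, α) a finite-dimensional Hom-bialgebra over k, and R ∈ A ⊗ A. Then (A, μ, Δ, α, R) is a braided Hom-bialgebra if and only if (A*, Δ*, μ*, α*, R̂) is a cobraided Hom-bialgebra, where A* = Hom(A, k) carries the dual Hom-bialgebra structure with multiplication Δ* (⟨Δ*(φ ⊗ ψ), x⟩ = Σ φ(x₁)ψ(x₂)), comultiplication μ* (⟨μ*(φ), x ⊗ y⟩ = φ(xy)), twisting map α* (α*(φ) = φ ∘ α), and where R̂ : A* ⊗ A* → k is the bilinear form R̂(φ ⊗ ψ) = Σ φ(s_i)ψ(t_i) for R = Σ s_i ⊗ t_i. -/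

import Mathlib

open TensorProduct

/-- The axioms of a Hom-bialgebra (no unit or counit assumed):
multiplicativity and comultiplicativity of the twisting map `α`,
Hom-associativity, Hom-coassociativity, and the compatibility
`Δ(xy) = Σ x₁y₁ ⊗ x₂y₂` (stated via arbitrary finite representations of the
Sweedler sums). -/
def IsHomBialgebra (k : Type*) {A : Type*} [CommRing k] [AddCommGroup A] [Module k A]
    (μ : A →ₗ[k] A →ₗ[k] A) (Δ : A →ₗ[k] A ⊗[k] A) (α : A →ₗ[k] A) : Prop :=
  (∀ x y : A, α (μ x y) = μ (α x) (α y)) ∧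
  (∀ x y z : A, μ (α x) (μ y z) = μ (μ x y) (α z)) ∧
  (TensorProduct.map α α ∘ₗ Δ = Δ ∘ₗ α) ∧
  (TensorProduct.map α Δ ∘ₗ Δ =
    (TensorProduct.assoc k A A A).toLinearMap ∘ₗ TensorProduct.map Δ α ∘ₗ Δ) ∧
  (∀ (x y : A) (m n : ℕ) (x1 x2 : Fin m → A) (y1 y2 : Fin n → A),
    Δ x = ∑ i, x1 i ⊗ₜ[k] x2 i → Δ y = ∑ j, y1 j ⊗ₜ[k] y2 j →
    Δ (μ x y) = ∑ i, ∑ j, μ (x1 i) (y1 j) ⊗ₜ[k] μ (x2 i) (y2 j))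

/-- A cobraided Hom-bialgebra: a Hom-bialgebra together with a bilinear form `R`
satisfying the three axioms (i), (ii), (iii), stated via arbitrary finite
representations of the Sweedler sums. -/
def IsCobraidedHomBialgebra (k : Type*) {A : Type*} [CommRing k] [AddCommGroup A] [Module k A]
    (μ : A →ₗ[k] A →ₗ[k] A) (Δ : A →ₗ[k] A ⊗[k] A) (α : A →ₗ[k] A)
    (R : A →ₗ[k] A →ₗ[k] k) : Prop :=
  IsHomBialgebra k μ Δ α ∧
  (∀ (x y z : A) (n : ℕ) (z1 z2 : Fin n → A), Δ z = ∑ i, z1 i ⊗ₜ[k] z2 i →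
    R (μ x y) (α z) = ∑ i, R (α x) (z1 i) * R (α y) (z2 i)) ∧
  (∀ (x y z : A) (n : ℕ) (x1 x2 : Fin n → A), Δ x = ∑ i, x1 i ⊗ₜ[k] x2 i →
    R (α x) (μ y z) = ∑ i, R (x1 i) (α z) * R (x2 i) (α y)) ∧
  (∀ (x y : A) (m n : ℕ) (x1 x2 : Fin m → A) (y1 y2 : Fin n → A),
    Δ x = ∑ i, x1 i ⊗ₜ[k] x2 i → Δ y = ∑ j, y1 j ⊗ₜ[k] y2 j →
    ∑ i, ∑ j, R (x2 i) (y2 j) • μ (y1 j) (x1 i)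
      = ∑ i, ∑ j, R (x1 i) (y1 j) • μ (x2 i) (y2 j))

/-- A (classical) cobraided bialgebra, without unit, counit, or invertibility of `R`. -/
def IsCobraidedBialgebra (k : Type*) {A : Type*} [CommRing k] [AddCommGroup A] [Module k A]
    (μ : A →ₗ[k] A →ₗ[k] A) (Δ : A →ₗ[k] A ⊗[k] A) (R : A →ₗ[k] A →ₗ[k] k) : Prop :=
  (∀ x y z : A, μ (μ x y) z = μ x (μ y z)) ∧
  (TensorProduct.map LinearMap.id Δ ∘ₗ Δ =
    (TensorProduct.assoc k A A A).toLinearMap ∘ₗ TensorProduct.map Δ LinearMap.id ∘ₗ Δ) ∧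
  (∀ (x y : A) (m n : ℕ) (x1 x2 : Fin m → A) (y1 y2 : Fin n → A),
    Δ x = ∑ i, x1 i ⊗ₜ[k] x2 i → Δ y = ∑ j, y1 j ⊗ₜ[k] y2 j →
    Δ (μ x y) = ∑ i, ∑ j, μ (x1 i) (y1 j) ⊗ₜ[k] μ (x2 i) (y2 j)) ∧
  (∀ (x y z : A) (n : ℕ) (z1 z2 : Fin n → A), Δ z = ∑ i, z1 i ⊗ₜ[k] z2 i →
    R (μ x y) z = ∑ i, R x (z1 i) * R y (z2 i)) ∧
  (∀ (x y z : A) (n : ℕ) (x1 x2 : Fin n → A), Δ x = ∑ i, x1 i ⊗ₜ[k] x2 i →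
    R x (μ y z) = ∑ i, R (x1 i) z * R (x2 i) y) ∧
  (∀ (x y : A) (m n : ℕ) (x1 x2 : Fin m → A) (y1 y2 : Fin n → A),
    Δ x = ∑ i, x1 i ⊗ₜ[k] x2 i → Δ y = ∑ j, y1 j ⊗ₜ[k] y2 j →
    ∑ i, ∑ j, R (x2 i) (y2 j) • μ (y1 j) (x1 i)
      = ∑ i, ∑ j, R (x1 i) (y1 j) • μ (x2 i) (y2 j))

/-- A braided (quasi-triangular) Hom-bialgebra, with `R ∈ A ⊗ A`. -/
def IsBraidedHomBialgebra (k : Type*) {A : Type*} [CommRing k] [AddCommGroup A] [Module k A]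
    (μ : A →ₗ[k] A →ₗ[k] A) (Δ : A →ₗ[k] A ⊗[k] A) (α : A →ₗ[k] A)
    (Rel : A ⊗[k] A) : Prop :=
  IsHomBialgebra k μ Δ α ∧
  (∀ (n : ℕ) (s t : Fin n → A), Rel = ∑ i, s i ⊗ₜ[k] t i →
    TensorProduct.map Δ α Rel = ∑ i, ∑ j, (α (s i) ⊗ₜ[k] α (s j)) ⊗ₜ[k] μ (t i) (t j)) ∧
  (∀ (n : ℕ) (s t : Fin n → A), Rel = ∑ i, s i ⊗ₜ[k] t i →
    TensorProduct.map α Δ Rel = ∑ i, ∑ j, μ (s i) (s j) ⊗ₜ[k] (α (t j) ⊗ₜ[k] α (t i))) ∧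
  (∀ (x : A) (m n : ℕ) (x1 x2 : Fin m → A) (s t : Fin n → A),
    Δ x = ∑ i, x1 i ⊗ₜ[k] x2 i → Rel = ∑ i, s i ⊗ₜ[k] t i →
    ∑ i, ∑ j, μ (x2 i) (s j) ⊗ₜ[k] μ (x1 i) (t j)
      = ∑ i, ∑ j, μ (s j) (x1 i) ⊗ₜ[k] μ (t j) (x2 i))

/-- The convolution-type product on the dual induced by a comultiplication:
`⟨Δ*(φ ⊗ ψ), x⟩ = Σ φ(x₁) ψ(x₂)`. -/
noncomputable def deltaStar (k : Type*) {A : Type*} [CommRing k] [AddCommGroup A] [Module k A]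
    (Δ : A →ₗ[k] A ⊗[k] A) (φ ψ : Module.Dual k A) : Module.Dual k A :=
  TensorProduct.lift ((LinearMap.mul k k).compl₁₂ φ ψ) ∘ₗ Δ

/-- The bilinear version of `deltaStar`, `Δ* : A* →ₗ A* →ₗ A*`. -/
noncomputable def deltaStarBil (k : Type*) {A : Type*} [CommRing k] [AddCommGroup A] [Module k A]
    (Δ : A →ₗ[k] A ⊗[k] A) :
    Module.Dual k A →ₗ[k] Module.Dual k A →ₗ[k] Module.Dual k A :=
  TensorProduct.curry (Δ.dualMap ∘ₗ TensorProduct.dualDistrib k A A)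

/-- The dual comultiplication `μ* : A* → A* ⊗ A*` of a multiplication `μ` on a
finite free module, determined by `⟨μ*(φ), x ⊗ y⟩ = φ(xy)`. -/
noncomputable def mulStar (k : Type*) {A : Type*} [CommRing k] [AddCommGroup A] [Module k A]
    [Module.Finite k A] [Module.Free k A] (μ : A →ₗ[k] A →ₗ[k] A) :
    Module.Dual k A →ₗ[k] Module.Dual k A ⊗[k] Module.Dual k A :=
  (TensorProduct.dualDistribEquiv k A A).symm.toLinearMap ∘ₗ (TensorProduct.lift μ).dualMap

/-- The bilinear form `R̂` on the dual induced by an element `Rel = Σ sᵢ ⊗ tᵢ ∈ A ⊗ A`: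
`R̂(φ ⊗ ψ) = Σ φ(sᵢ) ψ(tᵢ)`. -/
noncomputable def rhat (k : Type*) {A : Type*} [CommRing k] [AddCommGroup A] [Module k A]
    (Rel : A ⊗[k] A) : Module.Dual k A →ₗ[k] Module.Dual k A →ₗ[k] k :=
  TensorProduct.curry (LinearMap.applyₗ (R := k) Rel ∘ₗ TensorProduct.dualDistrib k A A)

/-- A comodule `(M, α_M, ρ)` over a Hom-coassociative coalgebra `(A, Δ, α)`:
Hom-coassociativity and comultiplicativity of the structure map. -/
def IsComodule (k : Type*) {A M : Type*} [CommRing k] [AddCommGroup A] [Module k A]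
    [AddCommGroup M] [Module k M] (Δ : A →ₗ[k] A ⊗[k] A) (α : A →ₗ[k] A)
    (αM : M →ₗ[k] M) (ρ : M →ₗ[k] A ⊗[k] M) : Prop :=
  ((TensorProduct.assoc k A A M).toLinearMap ∘ₗ TensorProduct.map Δ αM ∘ₗ ρ
      = TensorProduct.map α ρ ∘ₗ ρ) ∧
  (TensorProduct.map α αM ∘ₗ ρ = ρ ∘ₗ αM)

/-- The map `B_{V,W} : V ⊗ W → W ⊗ V`, `B_{V,W}(v ⊗ w) = Σ R(w_A ⊗ v_A) w_W ⊗ v_V`,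
induced by comodule structure maps `ρ_V`, `ρ_W` and a bilinear form `R`. -/
noncomputable def Bmap (k : Type*) {A V W : Type*} [CommRing k] [AddCommGroup A] [Module k A]
    [AddCommGroup V] [Module k V] [AddCommGroup W] [Module k W]
    (R : A →ₗ[k] A →ₗ[k] k) (ρV : V →ₗ[k] A ⊗[k] V) (ρW : W →ₗ[k] A ⊗[k] W) :
    V ⊗[k] W →ₗ[k] W ⊗[k] V :=
  (TensorProduct.lid k (W ⊗[k] V)).toLinearMap
    ∘ₗ TensorProduct.map (TensorProduct.lift R) LinearMap.id
    ∘ₗ (TensorProduct.tensorTensorTensorComm k A W A V).toLinearMap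
    ∘ₗ TensorProduct.map ρW ρV
    ∘ₗ (TensorProduct.comm k V W).toLinearMap

/-- `B` is a solution of the Hom-Yang-Baxter equation for `(V, αV)`. -/
def IsHYBESolution (k : Type*) {V : Type*} [CommRing k] [AddCommGroup V] [Module k V]
    (αV : V →ₗ[k] V) (B : V ⊗[k] V →ₗ[k] V ⊗[k] V) : Prop :=
  (B ∘ₗ TensorProduct.map αV αV = TensorProduct.map αV αV ∘ₗ B) ∧
  ((TensorProduct.assoc k V V V).symm.toLinearMap
      ∘ₗ TensorProduct.map αV B
      ∘ₗ (TensorProduct.assoc k V V V).toLinearMap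
      ∘ₗ TensorProduct.map B αV
      ∘ₗ (TensorProduct.assoc k V V V).symm.toLinearMap
      ∘ₗ TensorProduct.map αV B
      ∘ₗ (TensorProduct.assoc k V V V).toLinearMap
    = TensorProduct.map B αV
      ∘ₗ (TensorProduct.assoc k V V V).symm.toLinearMap
      ∘ₗ TensorProduct.map αV B
      ∘ₗ (TensorProduct.assoc k V V V).toLinearMap
      ∘ₗ TensorProduct.map B αV)

/-- A (classical, possibly non-unital non-counital) bialgebra. -/
def IsBialgebraNC (k : Type*) {H : Type*} [CommRing k] [AddCommGroup H] [Module k H]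
    (μ : H →ₗ[k] H →ₗ[k] H) (Δ : H →ₗ[k] H ⊗[k] H) : Prop :=
  (∀ x y z : H, μ (μ x y) z = μ x (μ y z)) ∧
  (TensorProduct.map LinearMap.id Δ ∘ₗ Δ =
    (TensorProduct.assoc k H H H).toLinearMap ∘ₗ TensorProduct.map Δ LinearMap.id ∘ₗ Δ) ∧
  (∀ (x y : H) (m n : ℕ) (x1 x2 : Fin m → H) (y1 y2 : Fin n → H),
    Δ x = ∑ i, x1 i ⊗ₜ[k] x2 i → Δ y = ∑ j, y1 j ⊗ₜ[k] y2 j →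
    Δ (μ x y) = ∑ i, ∑ j, μ (x1 i) (y1 j) ⊗ₜ[k] μ (x2 i) (y2 j))

set_option linter.unusedSectionVars false
set_option maxHeartbeats 1600000
set_option synthInstance.maxHeartbeats 400000

section AuxSums

theorem aux_sum4 {k : Type*} [CommRing k] {m n p q : ℕ}
    (f : Fin m → Fin p → k) (g : Fin n → Fin p → k)
    (h : Fin m → Fin q → k) (l : Fin n → Fin q → k) :
    ∑ i, ∑ j, (∑ a, f i a * g j a) * (∑ b, h i b * l j b)
      = ∑ a, ∑ b, (∑ i, f i a * h i b) * (∑ j, g j a * l j b) := by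
  calc
    ∑ i, ∑ j, (∑ a, f i a * g j a) * (∑ b, h i b * l j b)
        = ∑ i, ∑ j, ∑ a, ∑ b, (f i a * g j a) * (h i b * l j b) := by
          refine Finset.sum_congr rfl fun i _ => Finset.sum_congr rfl fun j _ => ?_
          rw [Finset.sum_mul_sum]
    _ = ∑ x : (Fin m × Fin n) × (Fin p × Fin q),
          (f x.1.1 x.2.1 * g x.1.2 x.2.1) * (h x.1.1 x.2.2 * l x.1.2 x.2.2) := by
          simp only [Fintype.sum_prod_type]
    _ = ∑ x : (Fin p × Fin q) × (Fin m × Fin n),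
          (f x.2.1 x.1.1 * h x.2.1 x.1.2) * (g x.2.2 x.1.1 * l x.2.2 x.1.2) :=
          Fintype.sum_equiv (Equiv.prodComm _ _) _ _ (fun x => by
            obtain ⟨⟨i, j⟩, a, b⟩ := x; simp [Equiv.prodComm]; ring)
    _ = ∑ a, ∑ b, ∑ i, ∑ j, (f i a * h i b) * (g j a * l j b) := by
          simp only [Fintype.sum_prod_type]
    _ = ∑ a, ∑ b, (∑ i, f i a * h i b) * (∑ j, g j a * l j b) := by
          refine Finset.sum_congr rfl fun a _ => Finset.sum_congr rfl fun b _ => ?_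
          rw [Finset.sum_mul_sum]

theorem aux_sum3 {k : Type*} [CommRing k] {n r : ℕ}
    (P Q : Fin r → k) (X Y : Fin n → Fin r → k) :
    ∑ c, (∑ a, X c a * P a) * (∑ b, Y c b * Q b)
      = ∑ a, ∑ b, (∑ c, X c a * Y c b) * (P a * Q b) := by
  calc
    ∑ c, (∑ a, X c a * P a) * (∑ b, Y c b * Q b)
        = ∑ c, ∑ a, ∑ b, (X c a * P a) * (Y c b * Q b) := by
          refine Finset.sum_congr rfl fun c _ => ?_
          rw [Finset.sum_mul_sum]
    _ = ∑ x : Fin n × (Fin r × Fin r),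
          (X x.1 x.2.1 * P x.2.1) * (Y x.1 x.2.2 * Q x.2.2) := by
          simp only [Fintype.sum_prod_type]
    _ = ∑ x : (Fin r × Fin r) × Fin n,
          (X x.2 x.1.1 * Y x.2 x.1.2) * (P x.1.1 * Q x.1.2) :=
          Fintype.sum_equiv (Equiv.prodComm _ _) _ _ (fun x => by
            obtain ⟨c, a, b⟩ := x; simp [Equiv.prodComm]; ring)
    _ = ∑ a, ∑ b, ∑ c, (X c a * Y c b) * (P a * Q b) := by
          simp only [Fintype.sum_prod_type]
    _ = ∑ a, ∑ b, (∑ c, X c a * Y c b) * (P a * Q b) := by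
          refine Finset.sum_congr rfl fun a _ => Finset.sum_congr rfl fun b _ => ?_
          rw [Finset.sum_mul]

theorem aux_exists_rep {R M N : Type*} [CommRing R] [AddCommGroup M] [Module R M]
    [AddCommGroup N] [Module R N] (t : M ⊗[R] N) :
    ∃ (n : ℕ) (a : Fin n → M) (b : Fin n → N), t = ∑ i, a i ⊗ₜ[R] b i := by
  obtain ⟨S, hS⟩ := TensorProduct.exists_finset t
  refine ⟨S.card, fun i => ((S.equivFin.symm i : S) : M × N).1,
    fun i => ((S.equivFin.symm i : S) : M × N).2, ?_⟩
  rw [hS, ← Finset.sum_coe_sort S, ← Equiv.sum_comp S.equivFin.symm]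

end AuxSums

section Aux
variable {k A : Type*} [Field k] [AddCommGroup A] [Module k A] [FiniteDimensional k A]

theorem aux_sepA {M : Type*} [AddCommGroup M] [Module k M] {u v : M}
    (h : ∀ f : Module.Dual k M, f u = f v) : u = v := by
  rw [← sub_eq_zero, ← Module.forall_dual_apply_eq_zero_iff k]
  intro f; simp [h f]

theorem aux_sep2A {u v : A ⊗[k] A}
    (h : ∀ φ ψ : Module.Dual k A, dualDistrib k A A (φ ⊗ₜ ψ) u = dualDistrib k A A (φ ⊗ₜ ψ) v) :
    u = v := by
  apply aux_sepA (k := k); intro f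
  obtain ⟨ξ, rfl⟩ : ∃ ξ, dualDistrib k A A ξ = f :=
    ⟨(dualDistribEquiv k A A).symm f, (dualDistribEquiv k A A).apply_symm_apply f⟩
  induction ξ using TensorProduct.induction_on with
  | zero => simp
  | tmul φ ψ => exact h φ ψ
  | add a b ha hb => simp [map_add, ha, hb]

theorem aux_sep3L {u v : (A ⊗[k] A) ⊗[k] A}
    (h : ∀ φ ψ χ : Module.Dual k A,
      dualDistrib k (A ⊗[k] A) A (dualDistrib k A A (φ ⊗ₜ ψ) ⊗ₜ χ) u
        = dualDistrib k (A ⊗[k] A) A (dualDistrib k A A (φ ⊗ₜ ψ) ⊗ₜ χ) v) : u = v := by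
  apply aux_sepA (k := k); intro f
  obtain ⟨ξ, rfl⟩ : ∃ ξ, dualDistrib k (A ⊗[k] A) A ξ = f :=
    ⟨(dualDistribEquiv k (A ⊗[k] A) A).symm f,
      (dualDistribEquiv k (A ⊗[k] A) A).apply_symm_apply f⟩
  induction ξ using TensorProduct.induction_on with
  | zero => simp
  | tmul g χ =>
    obtain ⟨ζ, rfl⟩ : ∃ ζ, dualDistrib k A A ζ = g :=
      ⟨(dualDistribEquiv k A A).symm g, (dualDistribEquiv k A A).apply_symm_apply g⟩
    induction ζ using TensorProduct.induction_on with
    | zero => simp [TensorProduct.zero_tmul]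
    | tmul φ ψ => exact h φ ψ χ
    | add a b ha hb => simp only [map_add, TensorProduct.add_tmul] at *; simp [ha, hb]
  | add a b ha hb => simp [map_add, ha, hb]

theorem aux_sep3R {u v : A ⊗[k] (A ⊗[k] A)}
    (h : ∀ φ ψ χ : Module.Dual k A,
      dualDistrib k A (A ⊗[k] A) (φ ⊗ₜ dualDistrib k A A (ψ ⊗ₜ χ)) u
        = dualDistrib k A (A ⊗[k] A) (φ ⊗ₜ dualDistrib k A A (ψ ⊗ₜ χ)) v) : u = v := by
  apply aux_sepA (k := k); intro f
  obtain ⟨ξ, rfl⟩ : ∃ ξ, dualDistrib k A (A ⊗[k] A) ξ = f :=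
    ⟨(dualDistribEquiv k A (A ⊗[k] A)).symm f,
      (dualDistribEquiv k A (A ⊗[k] A)).apply_symm_apply f⟩
  induction ξ using TensorProduct.induction_on with
  | zero => simp
  | tmul φ g =>
    obtain ⟨ζ, rfl⟩ : ∃ ζ, dualDistrib k A A ζ = g :=
      ⟨(dualDistribEquiv k A A).symm g, (dualDistribEquiv k A A).apply_symm_apply g⟩
    induction ζ using TensorProduct.induction_on with
    | zero => simp [TensorProduct.tmul_zero]
    | tmul ψ χ => exact h φ ψ χ
    | add a b ha hb => simp only [map_add, TensorProduct.tmul_add] at *; simp [ha, hb]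
  | add a b ha hb => simp [map_add, ha, hb]

theorem deltaStarBil_apply (Δ : A →ₗ[k] A ⊗[k] A) (φ ψ : Module.Dual k A) (x : A) :
    deltaStarBil k Δ φ ψ x = dualDistrib k A A (φ ⊗ₜ ψ) (Δ x) := rfl

theorem rhat_apply (Rel : A ⊗[k] A) (φ ψ : Module.Dual k A) :
    rhat k Rel φ ψ = dualDistrib k A A (φ ⊗ₜ ψ) Rel := rfl

theorem mulStar_pair (μ : A →ₗ[k] A →ₗ[k] A) (φ : Module.Dual k A) (x y : A) :
    dualDistrib k A A (mulStar k μ φ) (x ⊗ₜ y) = φ (μ x y) := by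
  have : dualDistrib k A A (mulStar k μ φ) = (TensorProduct.lift μ).dualMap φ :=
    (dualDistribEquiv k A A).apply_symm_apply _
  rw [this]; rfl

theorem aux_dd_rep {n : ℕ} {t : A ⊗[k] A} {a b : Fin n → A} (ht : t = ∑ i, a i ⊗ₜ[k] b i)
    (φ ψ : Module.Dual k A) :
    dualDistrib k A A (φ ⊗ₜ ψ) t = ∑ i, φ (a i) * ψ (b i) := by
  subst ht; simp

theorem aux_dd_rep' {n : ℕ} {ξ : Module.Dual k A ⊗[k] Module.Dual k A}
    {a b : Fin n → Module.Dual k A} (hξ : ξ = ∑ i, a i ⊗ₜ[k] b i) (x y : A) :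
    dualDistrib k A A ξ (x ⊗ₜ y) = ∑ i, a i x * b i y := by
  subst hξ; simp [LinearMap.sum_apply]

theorem aux_deltaStarBil_rep {Δ : A →ₗ[k] A ⊗[k] A} {x : A} {n : ℕ} {x1 x2 : Fin n → A}
    (hx : Δ x = ∑ i, x1 i ⊗ₜ[k] x2 i) (φ ψ : Module.Dual k A) :
    deltaStarBil k Δ φ ψ x = ∑ i, φ (x1 i) * ψ (x2 i) := by
  rw [deltaStarBil_apply, aux_dd_rep hx]

theorem aux_mulStar_rep {μ : A →ₗ[k] A →ₗ[k] A} {φ : Module.Dual k A} {n : ℕ}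
    {φ1 φ2 : Fin n → Module.Dual k A} (hφ : mulStar k μ φ = ∑ i, φ1 i ⊗ₜ[k] φ2 i)
    (u v : A) : ∑ i, φ1 i u * φ2 i v = φ (μ u v) := by
  rw [← aux_dd_rep' hφ, mulStar_pair]

theorem aux_rhat_rep {Rel : A ⊗[k] A} {n : ℕ} {s t : Fin n → A}
    (hR : Rel = ∑ i, s i ⊗ₜ[k] t i) (φ ψ : Module.Dual k A) :
    rhat k Rel φ ψ = ∑ i, φ (s i) * ψ (t i) := by
  rw [rhat_apply, aux_dd_rep hR]

theorem aux_dd_mapαα (α : A →ₗ[k] A) (φ ψ : Module.Dual k A) (t : A ⊗[k] A) :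
    dualDistrib k A A (α.dualMap φ ⊗ₜ α.dualMap ψ) t
      = dualDistrib k A A (φ ⊗ₜ ψ) (TensorProduct.map α α t) := by
  induction t using TensorProduct.induction_on with
  | zero => simp
  | tmul x y => simp
  | add a b ha hb => simp [ha, hb]

theorem aux_L1 (Δ : A →ₗ[k] A ⊗[k] A) (α : A →ₗ[k] A) (φ ψ χ : Module.Dual k A)
    (t : A ⊗[k] A) :
    dualDistrib k A A (α.dualMap φ ⊗ₜ deltaStarBil k Δ ψ χ) t
      = dualDistrib k A (A ⊗[k] A) (φ ⊗ₜ dualDistrib k A A (ψ ⊗ₜ χ))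
          (TensorProduct.map α Δ t) := by
  induction t using TensorProduct.induction_on with
  | zero => simp
  | tmul x y => simp [deltaStarBil_apply]
  | add a b ha hb => simp [ha, hb]

theorem aux_L2 (Δ : A →ₗ[k] A ⊗[k] A) (α : A →ₗ[k] A) (φ ψ χ : Module.Dual k A)
    (t : A ⊗[k] A) :
    dualDistrib k A A (deltaStarBil k Δ φ ψ ⊗ₜ α.dualMap χ) t
      = dualDistrib k (A ⊗[k] A) A (dualDistrib k A A (φ ⊗ₜ ψ) ⊗ₜ χ)
          (TensorProduct.map Δ α t) := by
  induction t using TensorProduct.induction_on with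
  | zero => simp
  | tmul x y => simp [deltaStarBil_apply]
  | add a b ha hb => simp [ha, hb]

theorem aux_L3 (φ ψ χ : Module.Dual k A) (s : (A ⊗[k] A) ⊗[k] A) :
    dualDistrib k A (A ⊗[k] A) (φ ⊗ₜ dualDistrib k A A (ψ ⊗ₜ χ))
        ((TensorProduct.assoc k A A A) s)
      = dualDistrib k (A ⊗[k] A) A (dualDistrib k A A (φ ⊗ₜ ψ) ⊗ₜ χ) s := by
  have : (dualDistrib k A (A ⊗[k] A) (φ ⊗ₜ dualDistrib k A A (ψ ⊗ₜ χ))) ∘ₗ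
        (TensorProduct.assoc k A A A).toLinearMap
      = dualDistrib k (A ⊗[k] A) A (dualDistrib k A A (φ ⊗ₜ ψ) ⊗ₜ χ) := by
    apply TensorProduct.ext_threefold; intro x y z; simp [mul_assoc]
  exact LinearMap.congr_fun this s

noncomputable def E2 (x y : A) :
    Module.Dual k A ⊗[k] Module.Dual k A →ₗ[k] k :=
  LinearMap.applyₗ (x ⊗ₜ[k] y) ∘ₗ dualDistrib k A A

@[simp] theorem E2_tmul (x y : A) (φ ψ : Module.Dual k A) :
    E2 (k := k) x y (φ ⊗ₜ ψ) = φ x * ψ y := by simp [E2]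

noncomputable def E3R (x y z : A) :
    Module.Dual k A ⊗[k] (Module.Dual k A ⊗[k] Module.Dual k A) →ₗ[k] k :=
  LinearMap.applyₗ (x ⊗ₜ[k] (y ⊗ₜ[k] z)) ∘ₗ dualDistrib k A (A ⊗[k] A)
    ∘ₗ TensorProduct.map LinearMap.id (dualDistrib k A A)

@[simp] theorem E3R_tmul' (x y z : A) (φ : Module.Dual k A)
    (η : Module.Dual k A ⊗[k] Module.Dual k A) :
    E3R (k := k) x y z (φ ⊗ₜ η) = φ x * dualDistrib k A A η (y ⊗ₜ z) := by
  simp [E3R]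

noncomputable def E3L (x y z : A) :
    (Module.Dual k A ⊗[k] Module.Dual k A) ⊗[k] Module.Dual k A →ₗ[k] k :=
  LinearMap.applyₗ ((x ⊗ₜ[k] y) ⊗ₜ[k] z) ∘ₗ dualDistrib k (A ⊗[k] A) A
    ∘ₗ TensorProduct.map (dualDistrib k A A) LinearMap.id

@[simp] theorem E3L_tmul' (x y z : A) (η : Module.Dual k A ⊗[k] Module.Dual k A)
    (χ : Module.Dual k A) :
    E3L (k := k) x y z (η ⊗ₜ χ) = dualDistrib k A A η (x ⊗ₜ y) * χ z := by
  simp [E3L]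

theorem aux_sep2D {u v : Module.Dual k A ⊗[k] Module.Dual k A}
    (h : ∀ x y : A, E2 (k := k) x y u = E2 (k := k) x y v) : u = v := by
  apply (dualDistribEquiv k A A).injective
  show dualDistrib k A A u = dualDistrib k A A v
  exact TensorProduct.ext' h

theorem aux_sep3DR {u v : Module.Dual k A ⊗[k] (Module.Dual k A ⊗[k] Module.Dual k A)}
    (h : ∀ x y z : A, E3R (k := k) x y z u = E3R (k := k) x y z v) : u = v := by
  have hinj : Function.Injective
      (TensorProduct.map (LinearMap.id (R := k) (M := Module.Dual k A)) (dualDistrib k A A)) := by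
    have : TensorProduct.map (LinearMap.id (R := k) (M := Module.Dual k A)) (dualDistrib k A A)
        = (TensorProduct.congr (LinearEquiv.refl k (Module.Dual k A))
            (dualDistribEquiv k A A)).toLinearMap := by
      apply TensorProduct.ext'; intro a b; simp; rfl
    rw [this]; exact (TensorProduct.congr _ _).injective
  apply hinj
  apply (dualDistribEquiv k A (A ⊗[k] A)).injective
  show dualDistrib k A (A ⊗[k] A) _ = dualDistrib k A (A ⊗[k] A) _
  apply TensorProduct.ext'; intro x t
  induction t using TensorProduct.induction_on with
  | zero => simp
  | tmul y z => exact h x y z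
  | add a b ha hb => simp only [TensorProduct.tmul_add, map_add] at *; simp [ha, hb]

theorem aux_E2_mulStar (μ : A →ₗ[k] A →ₗ[k] A) (φ : Module.Dual k A) (x y : A) :
    E2 (k := k) x y (mulStar k μ φ) = φ (μ x y) := mulStar_pair μ φ x y

theorem aux_evαα (α : A →ₗ[k] A) (x y : A)
    (ξ : Module.Dual k A ⊗[k] Module.Dual k A) :
    E2 (k := k) x y (TensorProduct.map α.dualMap α.dualMap ξ) = E2 (α x) (α y) ξ := by
  induction ξ using TensorProduct.induction_on with
  | zero => simp
  | tmul φ ψ => simp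
  | add a b ha hb => simp [ha, hb]

theorem aux_evR (μ : A →ₗ[k] A →ₗ[k] A) (α : A →ₗ[k] A) (x y z : A)
    (ξ : Module.Dual k A ⊗[k] Module.Dual k A) :
    E3R (k := k) x y z (TensorProduct.map α.dualMap (mulStar k μ) ξ)
      = E2 (α x) (μ y z) ξ := by
  induction ξ using TensorProduct.induction_on with
  | zero => simp
  | tmul φ ψ => simp [mulStar_pair]
  | add a b ha hb => simp [ha, hb]

theorem aux_evL (μ : A →ₗ[k] A →ₗ[k] A) (α : A →ₗ[k] A) (x y z : A)
    (ξ : Module.Dual k A ⊗[k] Module.Dual k A) :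
    E3L (k := k) x y z (TensorProduct.map (mulStar k μ) α.dualMap ξ)
      = E2 (μ x y) (α z) ξ := by
  induction ξ using TensorProduct.induction_on with
  | zero => simp
  | tmul φ ψ => simp [mulStar_pair]
  | add a b ha hb => simp [ha, hb]

theorem aux_evAssoc (x y z : A)
    (η : (Module.Dual k A ⊗[k] Module.Dual k A) ⊗[k] Module.Dual k A) :
    E3R (k := k) x y z
        ((TensorProduct.assoc k (Module.Dual k A) (Module.Dual k A) (Module.Dual k A)) η)
      = E3L x y z η := by
  have : (E3R (k := k) x y z) ∘ₗ
        (TensorProduct.assoc k (Module.Dual k A) (Module.Dual k A) (Module.Dual k A)).toLinearMap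
      = E3L x y z := by
    apply TensorProduct.ext_threefold; intro φ ψ χ; simp [mul_assoc]
  exact LinearMap.congr_fun this η

end Aux

section Main
variable {k A : Type*} [Field k] [AddCommGroup A] [Module k A] [FiniteDimensional k A]

theorem aux_dual_hom {μ : A →ₗ[k] A →ₗ[k] A} {Δ : A →ₗ[k] A ⊗[k] A} {α : A →ₗ[k] A}
    (h : IsHomBialgebra k μ Δ α) :
    IsHomBialgebra k (deltaStarBil k Δ) (mulStar k μ) α.dualMap := by
  obtain ⟨hαμ, hassoc, hαΔ, hcoassoc, hcompat⟩ := h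
  have hΔα : ∀ x : A, TensorProduct.map α α (Δ x) = Δ (α x) := fun x =>
    LinearMap.congr_fun hαΔ x
  have hco : ∀ x : A, TensorProduct.map α Δ (Δ x)
      = (TensorProduct.assoc k A A A) (TensorProduct.map Δ α (Δ x)) := fun x =>
    LinearMap.congr_fun hcoassoc x
  refine ⟨?_, ?_, ?_, ?_, ?_⟩
  · intro φ ψ
    ext x
    simp only [LinearMap.dualMap_apply]
    rw [deltaStarBil_apply, deltaStarBil_apply, aux_dd_mapαα, hΔα]
  · intro φ ψ χ
    ext x
    rw [deltaStarBil_apply, deltaStarBil_apply, aux_L1, aux_L2, hco, aux_L3]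
  · ext φ
    apply aux_sep2D; intro x y
    simp only [LinearMap.comp_apply]
    rw [aux_evαα, aux_E2_mulStar, aux_E2_mulStar, LinearMap.dualMap_apply, hαμ]
  · ext φ
    apply aux_sep3DR; intro x y z
    simp only [LinearMap.comp_apply, LinearEquiv.coe_coe]
    rw [aux_evR, aux_E2_mulStar, aux_evAssoc, aux_evL, aux_E2_mulStar, hassoc]
  · intro φ ψ m n φ1 φ2 ψ1 ψ2 hφ hψ
    apply aux_sep2D; intro x y
    obtain ⟨p, x1, x2, hx⟩ := aux_exists_rep (Δ x)
    obtain ⟨q, y1, y2, hy⟩ := aux_exists_rep (Δ y)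
    calc E2 (k := k) x y (mulStar k μ (deltaStarBil k Δ φ ψ))
        = deltaStarBil k Δ φ ψ (μ x y) := aux_E2_mulStar μ _ x y
      _ = dualDistrib k A A (φ ⊗ₜ ψ) (Δ (μ x y)) := deltaStarBil_apply Δ φ ψ _
      _ = ∑ a, ∑ b, φ (μ (x1 a) (y1 b)) * ψ (μ (x2 a) (y2 b)) := by
            rw [hcompat x y p q x1 x2 y1 y2 hx hy]; simp
      _ = ∑ a, ∑ b, (∑ i, φ1 i (x1 a) * φ2 i (y1 b)) * (∑ j, ψ1 j (x2 a) * ψ2 j (y2 b)) := by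
            refine Finset.sum_congr rfl fun a _ => Finset.sum_congr rfl fun b _ => ?_
            rw [aux_mulStar_rep hφ, aux_mulStar_rep hψ]
      _ = ∑ i, ∑ j, (∑ a, φ1 i (x1 a) * ψ1 j (x2 a)) * (∑ b, φ2 i (y1 b) * ψ2 j (y2 b)) :=
            (aux_sum4 _ _ _ _).symm
      _ = ∑ i, ∑ j, (deltaStarBil k Δ (φ1 i) (ψ1 j)) x * (deltaStarBil k Δ (φ2 i) (ψ2 j)) y := by
            refine Finset.sum_congr rfl fun i _ => Finset.sum_congr rfl fun j _ => ?_
            rw [aux_deltaStarBil_rep hx, aux_deltaStarBil_rep hy]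
      _ = E2 (k := k) x y (∑ i, ∑ j,
            deltaStarBil k Δ (φ1 i) (ψ1 j) ⊗ₜ[k] deltaStarBil k Δ (φ2 i) (ψ2 j)) := by
            simp

-- evaluation lemmas on the A side (with representations)
variable {μ : A →ₗ[k] A →ₗ[k] A} {Δ : A →ₗ[k] A ⊗[k] A} {α : A →ₗ[k] A} {Rel : A ⊗[k] A}

theorem aux_ev1 {r : ℕ} {s t : Fin r → A} (hR : Rel = ∑ i, s i ⊗ₜ[k] t i)
    (φ ψ χ : Module.Dual k A) :
    dualDistrib k (A ⊗[k] A) A (dualDistrib k A A (φ ⊗ₜ ψ) ⊗ₜ χ)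
        (TensorProduct.map Δ α Rel)
      = ∑ a, deltaStarBil k Δ φ ψ (s a) * χ (α (t a)) := by
  rw [hR]; simp [deltaStarBil_apply]

theorem aux_ev1' {r : ℕ} (s t : Fin r → A) (φ ψ χ : Module.Dual k A) :
    dualDistrib k (A ⊗[k] A) A (dualDistrib k A A (φ ⊗ₜ ψ) ⊗ₜ χ)
        (∑ i, ∑ j, (α (s i) ⊗ₜ[k] α (s j)) ⊗ₜ[k] μ (t i) (t j))
      = ∑ i, ∑ j, φ (α (s i)) * ψ (α (s j)) * χ (μ (t i) (t j)) := by
  simp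

theorem aux_c1L {r : ℕ} {s t : Fin r → A} (hR : Rel = ∑ i, s i ⊗ₜ[k] t i)
    (φ ψ χ : Module.Dual k A) :
    rhat k Rel (deltaStarBil k Δ φ ψ) (α.dualMap χ)
      = ∑ a, deltaStarBil k Δ φ ψ (s a) * χ (α (t a)) := by
  rw [aux_rhat_rep hR]; simp

theorem aux_bridge1 {r n : ℕ} {s t : Fin r → A} {χ1 χ2 : Fin n → Module.Dual k A}
    {χ : Module.Dual k A}
    (hR : Rel = ∑ i, s i ⊗ₜ[k] t i) (hχ : mulStar k μ χ = ∑ i, χ1 i ⊗ₜ[k] χ2 i)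
    (φ ψ : Module.Dual k A) :
    ∑ c, rhat k Rel (α.dualMap φ) (χ1 c) * rhat k Rel (α.dualMap ψ) (χ2 c)
      = ∑ i, ∑ j, φ (α (s i)) * ψ (α (s j)) * χ (μ (t i) (t j)) := by
  calc
    ∑ c, rhat k Rel (α.dualMap φ) (χ1 c) * rhat k Rel (α.dualMap ψ) (χ2 c)
        = ∑ c, (∑ a, χ1 c (t a) * φ (α (s a))) * (∑ b, χ2 c (t b) * ψ (α (s b))) := by
          refine Finset.sum_congr rfl fun c _ => ?_
          rw [aux_rhat_rep hR, aux_rhat_rep hR]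
          simp only [LinearMap.dualMap_apply]
          refine congrArg₂ (· * ·) ?_ ?_ <;>
            exact Finset.sum_congr rfl fun a _ => mul_comm _ _
    _ = ∑ a, ∑ b, (∑ c, χ1 c (t a) * χ2 c (t b)) * (φ (α (s a)) * ψ (α (s b))) :=
          aux_sum3 _ _ _ _
    _ = ∑ i, ∑ j, φ (α (s i)) * ψ (α (s j)) * χ (μ (t i) (t j)) := by
          refine Finset.sum_congr rfl fun a _ => Finset.sum_congr rfl fun b _ => ?_
          rw [aux_mulStar_rep hχ]; ring

theorem aux_ev2 {r : ℕ} {s t : Fin r → A} (hR : Rel = ∑ i, s i ⊗ₜ[k] t i)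
    (φ ψ χ : Module.Dual k A) :
    dualDistrib k A (A ⊗[k] A) (φ ⊗ₜ dualDistrib k A A (ψ ⊗ₜ χ))
        (TensorProduct.map α Δ Rel)
      = ∑ a, φ (α (s a)) * deltaStarBil k Δ ψ χ (t a) := by
  rw [hR]; simp [deltaStarBil_apply]

theorem aux_ev2' {r : ℕ} (s t : Fin r → A) (φ ψ χ : Module.Dual k A) :
    dualDistrib k A (A ⊗[k] A) (φ ⊗ₜ dualDistrib k A A (ψ ⊗ₜ χ))
        (∑ i, ∑ j, μ (s i) (s j) ⊗ₜ[k] (α (t j) ⊗ₜ[k] α (t i)))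
      = ∑ i, ∑ j, φ (μ (s i) (s j)) * (ψ (α (t j)) * χ (α (t i))) := by
  simp

theorem aux_c2L {r : ℕ} {s t : Fin r → A} (hR : Rel = ∑ i, s i ⊗ₜ[k] t i)
    (φ ψ χ : Module.Dual k A) :
    rhat k Rel (α.dualMap φ) (deltaStarBil k Δ ψ χ)
      = ∑ a, φ (α (s a)) * deltaStarBil k Δ ψ χ (t a) := by
  rw [aux_rhat_rep hR]; simp

theorem aux_bridge2 {r n : ℕ} {s t : Fin r → A} {φ1 φ2 : Fin n → Module.Dual k A}
    {φ : Module.Dual k A}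
    (hR : Rel = ∑ i, s i ⊗ₜ[k] t i) (hφ : mulStar k μ φ = ∑ i, φ1 i ⊗ₜ[k] φ2 i)
    (ψ χ : Module.Dual k A) :
    ∑ c, rhat k Rel (φ1 c) (α.dualMap χ) * rhat k Rel (φ2 c) (α.dualMap ψ)
      = ∑ i, ∑ j, φ (μ (s i) (s j)) * (ψ (α (t j)) * χ (α (t i))) := by
  calc
    ∑ c, rhat k Rel (φ1 c) (α.dualMap χ) * rhat k Rel (φ2 c) (α.dualMap ψ)
        = ∑ c, (∑ a, φ1 c (s a) * χ (α (t a))) * (∑ b, φ2 c (s b) * ψ (α (t b))) := by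
          refine Finset.sum_congr rfl fun c _ => ?_
          rw [aux_rhat_rep hR, aux_rhat_rep hR]
          simp only [LinearMap.dualMap_apply]
    _ = ∑ a, ∑ b, (∑ c, φ1 c (s a) * φ2 c (s b)) * (χ (α (t a)) * ψ (α (t b))) :=
          aux_sum3 _ _ _ _
    _ = ∑ i, ∑ j, φ (μ (s i) (s j)) * (ψ (α (t j)) * χ (α (t i))) := by
          refine Finset.sum_congr rfl fun a _ => Finset.sum_congr rfl fun b _ => ?_
          rw [aux_mulStar_rep hφ]; ring

theorem aux_ev3 {p r : ℕ} (u v : Fin p → Fin r → A) (φ ψ : Module.Dual k A) :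
    dualDistrib k A A (φ ⊗ₜ ψ) (∑ c, ∑ a, u c a ⊗ₜ[k] v c a)
      = ∑ c, ∑ a, φ (u c a) * ψ (v c a) := by
  simp

theorem aux_bridge3L {x : A} {r p mφ mψ : ℕ} {s t : Fin r → A} {x1 x2 : Fin p → A}
    {φ ψ : Module.Dual k A} {φ1 φ2 : Fin mφ → Module.Dual k A}
    {ψ1 ψ2 : Fin mψ → Module.Dual k A}
    (hR : Rel = ∑ i, s i ⊗ₜ[k] t i) (hx : Δ x = ∑ i, x1 i ⊗ₜ[k] x2 i)
    (hφ : mulStar k μ φ = ∑ i, φ1 i ⊗ₜ[k] φ2 i)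
    (hψ : mulStar k μ ψ = ∑ i, ψ1 i ⊗ₜ[k] ψ2 i) :
    ∑ i, ∑ j, rhat k Rel (φ2 i) (ψ2 j) * deltaStarBil k Δ (ψ1 j) (φ1 i) x
      = ∑ c, ∑ a, φ (μ (x2 c) (s a)) * ψ (μ (x1 c) (t a)) := by
  calc
    ∑ i, ∑ j, rhat k Rel (φ2 i) (ψ2 j) * deltaStarBil k Δ (ψ1 j) (φ1 i) x
        = ∑ i, ∑ j, (∑ a, φ2 i (s a) * ψ2 j (t a)) * (∑ c, φ1 i (x2 c) * ψ1 j (x1 c)) := by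
          refine Finset.sum_congr rfl fun i _ => Finset.sum_congr rfl fun j _ => ?_
          rw [aux_rhat_rep hR, aux_deltaStarBil_rep hx]
          refine congrArg₂ (· * ·) rfl ?_
          exact Finset.sum_congr rfl fun c _ => mul_comm _ _
    _ = ∑ a, ∑ c, (∑ i, φ2 i (s a) * φ1 i (x2 c)) * (∑ j, ψ2 j (t a) * ψ1 j (x1 c)) :=
          aux_sum4 _ _ _ _
    _ = ∑ a, ∑ c, φ (μ (x2 c) (s a)) * ψ (μ (x1 c) (t a)) := by
          refine Finset.sum_congr rfl fun a _ => Finset.sum_congr rfl fun c _ => ?_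
          rw [show (∑ i, φ2 i (s a) * φ1 i (x2 c)) = ∑ i, φ1 i (x2 c) * φ2 i (s a) from
              Finset.sum_congr rfl fun i _ => mul_comm _ _,
            show (∑ j, ψ2 j (t a) * ψ1 j (x1 c)) = ∑ j, ψ1 j (x1 c) * ψ2 j (t a) from
              Finset.sum_congr rfl fun j _ => mul_comm _ _,
            aux_mulStar_rep hφ, aux_mulStar_rep hψ]
    _ = ∑ c, ∑ a, φ (μ (x2 c) (s a)) * ψ (μ (x1 c) (t a)) := Finset.sum_comm

theorem aux_bridge3R {x : A} {r p mφ mψ : ℕ} {s t : Fin r → A} {x1 x2 : Fin p → A}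
    {φ ψ : Module.Dual k A} {φ1 φ2 : Fin mφ → Module.Dual k A}
    {ψ1 ψ2 : Fin mψ → Module.Dual k A}
    (hR : Rel = ∑ i, s i ⊗ₜ[k] t i) (hx : Δ x = ∑ i, x1 i ⊗ₜ[k] x2 i)
    (hφ : mulStar k μ φ = ∑ i, φ1 i ⊗ₜ[k] φ2 i)
    (hψ : mulStar k μ ψ = ∑ i, ψ1 i ⊗ₜ[k] ψ2 i) :
    ∑ i, ∑ j, rhat k Rel (φ1 i) (ψ1 j) * deltaStarBil k Δ (φ2 i) (ψ2 j) x
      = ∑ c, ∑ a, φ (μ (s a) (x1 c)) * ψ (μ (t a) (x2 c)) := by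
  calc
    ∑ i, ∑ j, rhat k Rel (φ1 i) (ψ1 j) * deltaStarBil k Δ (φ2 i) (ψ2 j) x
        = ∑ i, ∑ j, (∑ a, φ1 i (s a) * ψ1 j (t a)) * (∑ c, φ2 i (x1 c) * ψ2 j (x2 c)) := by
          refine Finset.sum_congr rfl fun i _ => Finset.sum_congr rfl fun j _ => ?_
          rw [aux_rhat_rep hR, aux_deltaStarBil_rep hx]
    _ = ∑ a, ∑ c, (∑ i, φ1 i (s a) * φ2 i (x1 c)) * (∑ j, ψ1 j (t a) * ψ2 j (x2 c)) :=
          aux_sum4 _ _ _ _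
    _ = ∑ a, ∑ c, φ (μ (s a) (x1 c)) * ψ (μ (t a) (x2 c)) := by
          refine Finset.sum_congr rfl fun a _ => Finset.sum_congr rfl fun c _ => ?_
          rw [aux_mulStar_rep hφ, aux_mulStar_rep hψ]
    _ = ∑ c, ∑ a, φ (μ (s a) (x1 c)) * ψ (μ (t a) (x2 c)) := Finset.sum_comm

end Main

/-- Theorem 6.3: duality between finite dimensional braided and
cobraided Hom-bialgebras.  `(A, μ, Δ, α, R)` is a braided Hom-bialgebra iff
`(A*, Δ*, μ*, α*, R̂)` is a cobraided Hom-bialgebra. -/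
theorem braided_iff_dual_cobraided
    (k : Type*) {A : Type*} [Field k] [AddCommGroup A] [Module k A] [FiniteDimensional k A]
    (μ : A →ₗ[k] A →ₗ[k] A) (Δ : A →ₗ[k] A ⊗[k] A) (α : A →ₗ[k] A)
    (Rel : A ⊗[k] A)
    (h : IsHomBialgebra k μ Δ α) :
    IsBraidedHomBialgebra k μ Δ α Rel
      ↔ IsCobraidedHomBialgebra k (deltaStarBil k Δ) (mulStar k μ) α.dualMap
          (rhat k Rel) := by
  constructor
  · rintro ⟨-, hb1, hb2, hb3⟩
    refine ⟨aux_dual_hom h, ?_, ?_, ?_⟩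
    · intro φ ψ χ n χ1 χ2 hχ
      obtain ⟨r, s, t, hR⟩ := aux_exists_rep Rel
      calc rhat k Rel (deltaStarBil k Δ φ ψ) (α.dualMap χ)
          = ∑ a, deltaStarBil k Δ φ ψ (s a) * χ (α (t a)) := aux_c1L hR φ ψ χ
        _ = dualDistrib k (A ⊗[k] A) A (dualDistrib k A A (φ ⊗ₜ ψ) ⊗ₜ χ)
              (TensorProduct.map Δ α Rel) := (aux_ev1 hR φ ψ χ).symm
        _ = dualDistrib k (A ⊗[k] A) A (dualDistrib k A A (φ ⊗ₜ ψ) ⊗ₜ χ)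
              (∑ i, ∑ j, (α (s i) ⊗ₜ[k] α (s j)) ⊗ₜ[k] μ (t i) (t j)) := by
              rw [hb1 r s t hR]
        _ = ∑ i, ∑ j, φ (α (s i)) * ψ (α (s j)) * χ (μ (t i) (t j)) :=
              aux_ev1' s t φ ψ χ
        _ = ∑ c, rhat k Rel (α.dualMap φ) (χ1 c) * rhat k Rel (α.dualMap ψ) (χ2 c) :=
              (aux_bridge1 hR hχ φ ψ).symm
    · intro φ ψ χ n φ1 φ2 hφ
      obtain ⟨r, s, t, hR⟩ := aux_exists_rep Rel
      calc rhat k Rel (α.dualMap φ) (deltaStarBil k Δ ψ χ)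
          = ∑ a, φ (α (s a)) * deltaStarBil k Δ ψ χ (t a) := aux_c2L hR φ ψ χ
        _ = dualDistrib k A (A ⊗[k] A) (φ ⊗ₜ dualDistrib k A A (ψ ⊗ₜ χ))
              (TensorProduct.map α Δ Rel) := (aux_ev2 hR φ ψ χ).symm
        _ = dualDistrib k A (A ⊗[k] A) (φ ⊗ₜ dualDistrib k A A (ψ ⊗ₜ χ))
              (∑ i, ∑ j, μ (s i) (s j) ⊗ₜ[k] (α (t j) ⊗ₜ[k] α (t i))) := by
              rw [hb2 r s t hR]
        _ = ∑ i, ∑ j, φ (μ (s i) (s j)) * (ψ (α (t j)) * χ (α (t i))) :=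
              aux_ev2' s t φ ψ χ
        _ = ∑ c, rhat k Rel (φ1 c) (α.dualMap χ) * rhat k Rel (φ2 c) (α.dualMap ψ) :=
              (aux_bridge2 hR hφ ψ χ).symm
    · intro φ ψ m n φ1 φ2 ψ1 ψ2 hφ hψ
      ext x
      obtain ⟨p, x1, x2, hx⟩ := aux_exists_rep (Δ x)
      obtain ⟨r, s, t, hR⟩ := aux_exists_rep Rel
      have hb := hb3 x p r x1 x2 s t hx hR
      simp only [LinearMap.coe_sum, Finset.sum_apply, LinearMap.smul_apply, smul_eq_mul]
      calc ∑ i, ∑ j, rhat k Rel (φ2 i) (ψ2 j) * deltaStarBil k Δ (ψ1 j) (φ1 i) x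
          = ∑ c, ∑ a, φ (μ (x2 c) (s a)) * ψ (μ (x1 c) (t a)) :=
              aux_bridge3L hR hx hφ hψ
        _ = dualDistrib k A A (φ ⊗ₜ ψ)
              (∑ c, ∑ a, μ (x2 c) (s a) ⊗ₜ[k] μ (x1 c) (t a)) :=
              (aux_ev3 _ _ φ ψ).symm
        _ = dualDistrib k A A (φ ⊗ₜ ψ)
              (∑ c, ∑ a, μ (s a) (x1 c) ⊗ₜ[k] μ (t a) (x2 c)) := by rw [hb]
        _ = ∑ c, ∑ a, φ (μ (s a) (x1 c)) * ψ (μ (t a) (x2 c)) := aux_ev3 _ _ φ ψ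
        _ = ∑ i, ∑ j, rhat k Rel (φ1 i) (ψ1 j) * deltaStarBil k Δ (φ2 i) (ψ2 j) x :=
              (aux_bridge3R hR hx hφ hψ).symm
  · rintro ⟨-, hc1, hc2, hc3⟩
    refine ⟨h, ?_, ?_, ?_⟩
    · intro n s t hR
      apply aux_sep3L; intro φ ψ χ
      obtain ⟨nχ, χ1, χ2, hχ⟩ := aux_exists_rep (mulStar k μ χ)
      calc dualDistrib k (A ⊗[k] A) A (dualDistrib k A A (φ ⊗ₜ ψ) ⊗ₜ χ)
              (TensorProduct.map Δ α Rel)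
          = ∑ a, deltaStarBil k Δ φ ψ (s a) * χ (α (t a)) := aux_ev1 hR φ ψ χ
        _ = rhat k Rel (deltaStarBil k Δ φ ψ) (α.dualMap χ) := (aux_c1L hR φ ψ χ).symm
        _ = ∑ c, rhat k Rel (α.dualMap φ) (χ1 c) * rhat k Rel (α.dualMap ψ) (χ2 c) :=
              hc1 φ ψ χ nχ χ1 χ2 hχ
        _ = ∑ i, ∑ j, φ (α (s i)) * ψ (α (s j)) * χ (μ (t i) (t j)) :=
              aux_bridge1 hR hχ φ ψ
        _ = dualDistrib k (A ⊗[k] A) A (dualDistrib k A A (φ ⊗ₜ ψ) ⊗ₜ χ)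
              (∑ i, ∑ j, (α (s i) ⊗ₜ[k] α (s j)) ⊗ₜ[k] μ (t i) (t j)) :=
              (aux_ev1' s t φ ψ χ).symm
    · intro n s t hR
      apply aux_sep3R; intro φ ψ χ
      obtain ⟨nφ, φ1, φ2, hφ⟩ := aux_exists_rep (mulStar k μ φ)
      calc dualDistrib k A (A ⊗[k] A) (φ ⊗ₜ dualDistrib k A A (ψ ⊗ₜ χ))
              (TensorProduct.map α Δ Rel)
          = ∑ a, φ (α (s a)) * deltaStarBil k Δ ψ χ (t a) := aux_ev2 hR φ ψ χ
        _ = rhat k Rel (α.dualMap φ) (deltaStarBil k Δ ψ χ) := (aux_c2L hR φ ψ χ).symm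
        _ = ∑ c, rhat k Rel (φ1 c) (α.dualMap χ) * rhat k Rel (φ2 c) (α.dualMap ψ) :=
              hc2 φ ψ χ nφ φ1 φ2 hφ
        _ = ∑ i, ∑ j, φ (μ (s i) (s j)) * (ψ (α (t j)) * χ (α (t i))) :=
              aux_bridge2 hR hφ ψ χ
        _ = dualDistrib k A (A ⊗[k] A) (φ ⊗ₜ dualDistrib k A A (ψ ⊗ₜ χ))
              (∑ i, ∑ j, μ (s i) (s j) ⊗ₜ[k] (α (t j) ⊗ₜ[k] α (t i))) :=
              (aux_ev2' s t φ ψ χ).symm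
    · intro x m n x1 x2 s t hx hR
      apply aux_sep2A; intro φ ψ
      obtain ⟨mφ, φ1, φ2, hφ⟩ := aux_exists_rep (mulStar k μ φ)
      obtain ⟨mψ, ψ1, ψ2, hψ⟩ := aux_exists_rep (mulStar k μ ψ)
      have hcx := LinearMap.congr_fun (hc3 φ ψ mφ mψ φ1 φ2 ψ1 ψ2 hφ hψ) x
      simp only [LinearMap.coe_sum, Finset.sum_apply, LinearMap.smul_apply,
        smul_eq_mul] at hcx
      calc dualDistrib k A A (φ ⊗ₜ ψ)
              (∑ i, ∑ j, μ (x2 i) (s j) ⊗ₜ[k] μ (x1 i) (t j))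
          = ∑ i, ∑ j, φ (μ (x2 i) (s j)) * ψ (μ (x1 i) (t j)) := aux_ev3 _ _ φ ψ
        _ = ∑ i, ∑ j, rhat k Rel (φ2 i) (ψ2 j) * deltaStarBil k Δ (ψ1 j) (φ1 i) x :=
              (aux_bridge3L hR hx hφ hψ).symm
        _ = ∑ i, ∑ j, rhat k Rel (φ1 i) (ψ1 j) * deltaStarBil k Δ (φ2 i) (ψ2 j) x := hcx
        _ = ∑ i, ∑ j, φ (μ (s j) (x1 i)) * ψ (μ (t j) (x2 i)) :=
              aux_bridge3R hR hx hφ hψ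
        _ = dualDistrib k A A (φ ⊗ₜ ψ)
              (∑ i, ∑ j, μ (s j) (x1 i) ⊗ₜ[k] μ (t j) (x2 i)) := (aux_ev3 _ _ φ ψ).symm
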